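/- Let n ≥ 3 be an integer, α ∈ (2/n, 1], and T ∈ ℝ, and let C_α > 0 be the constant with C_α^α = 2 n^{α−1}(n − 2/α). Then the function ρ(x,t) = C_α ((T − t)/|x|²)^{1/α} is an exact solution of the fast diffusion equation: at every (x,t) ∈ ℝⁿ × ℝ with x ≠ 0 and t < T one has ∂_t ρ = Σ_{i=1}^{n} ∂_{x_i}( n^{α−1} ρ^{−α} ∂_{x_i} ρ ). -/

import Mathlib

open Real

/-- Partial derivative in the `i`-th coordinate direction. -/
noncomputable def pd {n : ℕ} (i : Fin n) (f : EuclideanSpace ℝ (Fin n) → ℝ)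
    (x : EuclideanSpace ℝ (Fin n)) : ℝ :=
  fderiv ℝ f x (EuclideanSpace.single i (1 : ℝ))

lemma pd_congr_of_ne {n : ℕ} (i : Fin n) {f g : EuclideanSpace ℝ (Fin n) → ℝ}
    {x : EuclideanSpace ℝ (Fin n)} (hx : x ≠ 0)
    (h : ∀ y : EuclideanSpace ℝ (Fin n), y ≠ 0 → f y = g y) : pd i f x = pd i g x := by
  have hev : f =ᶠ[nhds x] g := by
    filter_upwards [isOpen_compl_singleton.eventually_mem
      (show x ∈ ({0}ᶜ : Set (EuclideanSpace ℝ (Fin n))) by simpa using hx)] with y hy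
    exact h y (by simpa using hy)
  unfold pd
  rw [hev.fderiv_eq]

lemma hasFDerivAt_normsq_rpow {n : ℕ} (p : ℝ) {x : EuclideanSpace ℝ (Fin n)} (hx : x ≠ 0) :
    HasFDerivAt (fun y : EuclideanSpace ℝ (Fin n) => ((‖y‖ ^ 2 : ℝ)) ^ p)
      ((p * ((‖x‖ ^ 2 : ℝ)) ^ (p - 1)) •
        (2 • ((innerSL ℝ x).comp (ContinuousLinearMap.id ℝ (EuclideanSpace ℝ (Fin n)))))) x := by
  have h0 : HasFDerivAt (fun y : EuclideanSpace ℝ (Fin n) => (‖y‖ ^ 2 : ℝ))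
      (2 • ((innerSL ℝ x).comp (ContinuousLinearMap.id ℝ (EuclideanSpace ℝ (Fin n))))) x :=
    (hasFDerivAt_id x).norm_sq
  exact h0.rpow_const (Or.inl (pow_ne_zero _ (norm_ne_zero_iff.2 hx)))

lemma apply_single_eval {n : ℕ} (i : Fin n) (x : EuclideanSpace ℝ (Fin n)) :
    (2 • ((innerSL ℝ x).comp (ContinuousLinearMap.id ℝ (EuclideanSpace ℝ (Fin n)))))
      (EuclideanSpace.single i (1 : ℝ)) = 2 * x i := by
  simp [EuclideanSpace.inner_single_right, two_smul]
  ring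

lemma pd_mul_normsq_rpow {n : ℕ} (i : Fin n) (c p : ℝ) {x : EuclideanSpace ℝ (Fin n)}
    (hx : x ≠ 0) :
    pd i (fun y => c * ((‖y‖ ^ 2 : ℝ)) ^ p) x
      = c * (p * ((‖x‖ ^ 2 : ℝ)) ^ (p - 1) * (2 * x i)) := by
  have h := (hasFDerivAt_normsq_rpow p hx).const_mul c
  rw [pd, h.fderiv]
  rw [ContinuousLinearMap.smul_apply, ContinuousLinearMap.smul_apply, apply_single_eval]
  simp [smul_eq_mul]

lemma pd_mul_normsq_rpow_mul {n : ℕ} (i : Fin n) (c p : ℝ) {x : EuclideanSpace ℝ (Fin n)}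
    (hx : x ≠ 0) :
    pd i (fun y => c * ((‖y‖ ^ 2 : ℝ)) ^ p * y i) x
      = c * (p * ((‖x‖ ^ 2 : ℝ)) ^ (p - 1) * (2 * x i) * x i + ((‖x‖ ^ 2 : ℝ)) ^ p) := by
  have h1 := (hasFDerivAt_normsq_rpow p hx).const_mul c
  have h2 : HasFDerivAt (fun y : EuclideanSpace ℝ (Fin n) => y i)
      (PiLp.proj (𝕜 := ℝ) 2 (fun _ : Fin n => ℝ) i) x := by
    exact ContinuousLinearMap.hasFDerivAt (PiLp.proj (𝕜 := ℝ) 2 (fun _ : Fin n => ℝ) i)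
  have h : HasFDerivAt (fun y : EuclideanSpace ℝ (Fin n) => c * ((‖y‖ ^ 2 : ℝ)) ^ p * y i) _ x :=
    h1.mul h2
  rw [pd, h.fderiv]
  rw [ContinuousLinearMap.add_apply, ContinuousLinearMap.smul_apply,
    ContinuousLinearMap.smul_apply, ContinuousLinearMap.smul_apply,
    ContinuousLinearMap.smul_apply, apply_single_eval]
  simp [smul_eq_mul, EuclideanSpace.single_apply]
  ring

lemma rpow_split {S a b : ℝ} (hS : 0 < S) (h : a = b + 1) : S ^ a = S ^ b * S := by
  rw [h, Real.rpow_add hS, Real.rpow_one]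

/-- For `n ≥ 3`, `α ∈ (2/n, 1]` and `C_α^α = 2 n^{α−1}(n − 2/α)`, the profile
`ρ(x,t) = C_α ((T−t)/|x|²)^{1/α}` solves the fast diffusion equation
`∂_t ρ = ∑_i ∂_{x_i}( n^{α−1} ρ^{−α} ∂_{x_i} ρ )` at every `(x,t)` with
`x ≠ 0` and `t < T`. -/
theorem fde_selfsimilar_exact_solution (n : ℕ) (hn : 3 ≤ n) (α : ℝ)
    (hα : 2 / (n : ℝ) < α ∧ α ≤ 1) (T : ℝ) (Cα : ℝ) (hCpos : 0 < Cα)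
    (hCα : Cα ^ α = 2 * (n : ℝ) ^ (α - 1) * ((n : ℝ) - 2 / α))
    (ρ : EuclideanSpace ℝ (Fin n) → ℝ → ℝ)
    (hρ : ∀ x t, ρ x t = Cα * ((T - t) / ‖x‖ ^ 2) ^ (1 / α)) :
    ∀ (x : EuclideanSpace ℝ (Fin n)) (t : ℝ), x ≠ 0 → t < T →
      deriv (ρ x) t =
        ∑ i, pd i (fun y =>
          (n : ℝ) ^ (α - 1) * (ρ y t) ^ (-α) * pd i (fun z => ρ z t) y) x := by
  intro x t hx htT
  have hn0 : (0:ℝ) < n := by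
    have : (3:ℝ) ≤ n := by exact_mod_cast hn
    linarith
  have hα0 : (0:ℝ) < α := lt_trans (div_pos two_pos hn0) hα.1
  have hαne : α ≠ 0 := ne_of_gt hα0
  set β : ℝ := 1/α with hβ
  have hβ0 : β ≠ 0 := one_div_ne_zero hαne
  have hA : (0:ℝ) < T - t := sub_pos.2 htT
  have hxnorm : (0:ℝ) < ‖x‖ := norm_pos_iff.2 hx
  have hS : (0:ℝ) < (‖x‖ ^ 2 : ℝ) := by positivity
  set N : ℝ := (n:ℝ) ^ (α-1) with hN
  set K : ℝ := N * Cα^(1-α) * (T-t)^(β-1) * (-2*β) with hK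
  -- closed form of the profile away from the origin
  have hform : ∀ z : EuclideanSpace ℝ (Fin n), z ≠ 0 →
      ρ z t = (Cα * (T-t)^β) * ((‖z‖ ^ 2 : ℝ)) ^ (-β) := by
    intro z hz
    have hz0 : (0:ℝ) < ‖z‖ := norm_pos_iff.2 hz
    have hz2 : (0:ℝ) < (‖z‖ ^ 2 : ℝ) := by positivity
    rw [hρ, Real.div_rpow hA.le hz2.le, Real.rpow_neg hz2.le, div_eq_mul_inv, mul_assoc]
  -- spatial partial derivative of the profile
  have hpdρ : ∀ (i : Fin n) (y : EuclideanSpace ℝ (Fin n)), y ≠ 0 →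
      pd i (fun z => ρ z t) y
        = (Cα * (T-t)^β) * ((-β) * ((‖y‖ ^ 2 : ℝ)) ^ (-β-1) * (2 * y i)) := by
    intro i y hy
    rw [pd_congr_of_ne i hy (fun z hz => hform z hz)]
    exact pd_mul_normsq_rpow i (Cα * (T-t)^β) (-β) hy
  -- the flux has a simple closed form
  have hflux : ∀ (i : Fin n) (y : EuclideanSpace ℝ (Fin n)), y ≠ 0 →
      N * (ρ y t) ^ (-α) * pd i (fun z => ρ z t) y
        = K * ((‖y‖ ^ 2 : ℝ)) ^ (-β) * y i := by
    intro i y hy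
    have hy0 : (0:ℝ) < ‖y‖ := norm_pos_iff.2 hy
    have hy2 : (0:ℝ) < (‖y‖ ^ 2 : ℝ) := by positivity
    have hρy : (ρ y t) ^ (-α) = Cα ^ (-α) * (T-t)⁻¹ * (‖y‖ ^ 2 : ℝ) := by
      rw [hform y hy, Real.mul_rpow (by positivity) (by positivity),
        Real.mul_rpow hCpos.le (by positivity),
        ← Real.rpow_mul hA.le, ← Real.rpow_mul hy2.le,
        show β * (-α) = -1 by rw [hβ]; field_simp,
        show (-β) * (-α) = 1 by rw [hβ]; field_simp,
        Real.rpow_one, Real.rpow_neg_one]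
    rw [hρy, hpdρ i y hy]
    rw [hK,
      show Cα ^ (1-α) = Cα ^ (-α) * Cα by
        rw [show (1-α) = -α + 1 by ring, Real.rpow_add hCpos, Real.rpow_one],
      show (T-t) ^ (β-1) = (T-t)^β * (T-t)⁻¹ by
        rw [show β-1 = β + (-1) by ring, Real.rpow_add hA, Real.rpow_neg_one],
      show ((‖y‖ ^ 2 : ℝ)) ^ (-β) = (‖y‖ ^ 2 : ℝ) * ((‖y‖ ^ 2 : ℝ)) ^ (-β-1) from
        (rpow_split hy2 (by ring)).trans (mul_comm _ _)]
    ring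
  -- partial derivative of the flux
  have hpdflux : ∀ i : Fin n,
      pd i (fun y => N * (ρ y t) ^ (-α) * pd i (fun z => ρ z t) y) x
        = K * ((-β) * ((‖x‖ ^ 2 : ℝ)) ^ (-β-1) * (2 * x i) * x i + ((‖x‖ ^ 2 : ℝ)) ^ (-β)) := by
    intro i
    rw [pd_congr_of_ne i hx (fun y hy => hflux i y hy)]
    exact pd_mul_normsq_rpow_mul i K (-β) hx
  -- summing the divergence
  have hx2 : (‖x‖ ^ 2 : ℝ) = ∑ i, (x i)^2 := by
    rw [EuclideanSpace.norm_eq, Real.sq_sqrt (by positivity)]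
    simp [sq_abs]
  have hsum : ∑ i, (K * ((-β) * ((‖x‖ ^ 2 : ℝ)) ^ (-β-1) * (2 * x i) * x i + ((‖x‖ ^ 2 : ℝ)) ^ (-β)))
      = K * (((n:ℝ) - 2*β) * ((‖x‖ ^ 2 : ℝ)) ^ (-β)) := by
    have c1 : ((‖x‖ ^ 2 : ℝ)) ^ (-β-1) * (‖x‖ ^ 2 : ℝ) = ((‖x‖ ^ 2 : ℝ)) ^ (-β) :=
      (rpow_split hS (by ring)).symm
    calc ∑ i, (K * ((-β) * ((‖x‖ ^ 2 : ℝ)) ^ (-β-1) * (2 * x i) * x i + ((‖x‖ ^ 2 : ℝ)) ^ (-β)))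
        = ∑ i, ((K * ((-2*β) * ((‖x‖ ^ 2 : ℝ)) ^ (-β-1))) * (x i)^2 + K * ((‖x‖ ^ 2 : ℝ)) ^ (-β)) := by
          refine Finset.sum_congr rfl fun i _ => by ring
      _ = (K * ((-2*β) * ((‖x‖ ^ 2 : ℝ)) ^ (-β-1))) * (∑ i, (x i)^2)
            + (n:ℝ) * (K * ((‖x‖ ^ 2 : ℝ)) ^ (-β)) := by
          rw [Finset.sum_add_distrib, ← Finset.mul_sum, Finset.sum_const, Finset.card_univ,
            Fintype.card_fin, nsmul_eq_mul]
      _ = K * (((n:ℝ) - 2*β) * ((‖x‖ ^ 2 : ℝ)) ^ (-β)) := by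
          rw [← hx2]
          linear_combination (K * (-2*β)) * c1
  -- time derivative
  have hρx : ρ x = fun s => Cα * ((T - s)/(‖x‖ ^ 2 : ℝ)) ^ β := funext fun s => hρ x s
  have h1 : HasDerivAt (fun s : ℝ => (T - s)/(‖x‖ ^ 2 : ℝ)) (-1/(‖x‖ ^ 2 : ℝ)) t := by
    simpa using ((hasDerivAt_id t).const_sub T).div_const ((‖x‖ ^ 2 : ℝ))
  have h2 := h1.rpow_const (p := β) (Or.inl (ne_of_gt (div_pos hA hS)))
  have h3 := h2.const_mul Cα
  have hderiv : deriv (ρ x) t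
      = Cα * (-1/(‖x‖ ^ 2 : ℝ) * β * ((T-t)/(‖x‖ ^ 2 : ℝ)) ^ (β-1)) := by
    rw [hρx, h3.deriv]
  -- put everything together
  rw [hderiv]
  have hrw : ∀ i : Fin n,
      pd i (fun y => N * (ρ y t) ^ (-α) * pd i (fun z => ρ z t) y) x
        = K * ((-β) * ((‖x‖ ^ 2 : ℝ)) ^ (-β-1) * (2 * x i) * x i + ((‖x‖ ^ 2 : ℝ)) ^ (-β)) :=
    hpdflux
  rw [Finset.sum_congr rfl fun i _ => hrw i, hsum]
  -- final scalar identity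
  have hc : Cα ^ α * Cα ^ (1-α) = Cα := by
    rw [← Real.rpow_add hCpos]; norm_num
  have hCid : Cα = 2 * N * ((n:ℝ) - 2*β) * Cα ^ (1-α) :=
    calc Cα = Cα ^ α * Cα ^ (1-α) := hc.symm
      _ = 2 * N * ((n:ℝ) - 2/α) * Cα ^ (1-α) := by rw [hCα]
      _ = 2 * N * ((n:ℝ) - 2*β) * Cα ^ (1-α) := by rw [hβ]; ring
  rw [Real.div_rpow hA.le hS.le]
  have crel : ((‖x‖ ^ 2 : ℝ)) ^ (-β) = (((‖x‖ ^ 2 : ℝ)) ^ (β-1) * (‖x‖ ^ 2 : ℝ))⁻¹ := by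
    rw [show ((‖x‖ ^ 2 : ℝ)) ^ (β-1) * (‖x‖ ^ 2 : ℝ) = ((‖x‖ ^ 2 : ℝ)) ^ (β : ℝ) from
      (rpow_split hS (by ring)).symm]
    exact Real.rpow_neg hS.le β
  have hSb : ((‖x‖ ^ 2 : ℝ)) ^ (β-1) ≠ 0 := by positivity
  rw [hK, crel]
  conv_lhs => rw [hCid]
  have hA' : (T-t) ^ (β-1) ≠ 0 := by positivity
  field_simp
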